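/- arXiv:2505.19134 — 2 statements merged into one kernel-verified Lean document; each statement's English description precedes it below -/
import Mathlib

section
/- Suppose two random variables X and Y with CDFs F and G (both integrable) satisfy |F(z) - G(z)| ≤ K/(1+|z|³) for all z ∈ ℝ and some constant K. Then for every C ∈ ℝ, |E[X·1{X ≥ C}] - E[Y·1{Y ≥ C}]| ≤ K·(|C|/(1+|C|³) + ∫_ℝ dz/(1+|z|³)) ≤ K·(1 + ∫_ℝ dz/(1+|z|³)). -/
open MeasureTheory Set Filter

private lemma phi_int' : Integrable (fun z : ℝ => 1 / (1 + |z| ^ 3)) := by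
  apply (integrable_inv_one_add_sq.const_mul 2).mono'
  · apply Measurable.aestronglyMeasurable
    measurability
  · refine Filter.Eventually.of_forall fun z => ?_
    have ha : (0:ℝ) ≤ |z| := abs_nonneg z
    have h1 : (0:ℝ) < 1 + |z| ^ 3 := by positivity
    have h2 : (0:ℝ) < 1 + z ^ 2 := by positivity
    rw [Real.norm_eq_abs, abs_of_nonneg (by positivity), ← one_div, mul_one_div,
      div_le_div_iff₀ h1 h2]
    have hz : z ^ 2 = |z| ^ 2 := (sq_abs z).symm
    nlinarith [mul_nonneg ha (sq_nonneg (|z| - 1)), sq_nonneg (2*|z| - 1)]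

private lemma tail_int' {Ω : Type*} [MeasurableSpace Ω] (μ : Measure Ω) [IsProbabilityMeasure μ]
    {f : Ω → ℝ} (hf : Integrable f μ) (hnn : 0 ≤ f) :
    IntegrableOn (fun t => (μ {a | t < f a}).toReal) (Set.Ioi 0) := by
  have hmeas : Measurable fun t : ℝ => (μ {a | t < f a}).toReal := by
    refine Measurable.ennreal_toReal ?_
    exact Antitone.measurable (fun _ _ hst => measure_mono (fun _ h => lt_of_le_of_lt hst h))
  refine ⟨hmeas.aestronglyMeasurable.restrict, ?_⟩
  rw [hasFiniteIntegral_iff_ofReal (Filter.Eventually.of_forall fun t => ENNReal.toReal_nonneg)]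
  have : ∀ t : ℝ, ENNReal.ofReal ((μ {a | t < f a}).toReal) = μ {a | t < f a} :=
    fun t => ENNReal.ofReal_toReal (measure_ne_top μ _)
  rw [lintegral_congr fun t => this t]
  rw [← lintegral_eq_lintegral_meas_lt μ (Filter.Eventually.of_forall hnn) hf.aemeasurable]
  exact hf.lintegral_lt_top

private lemma set_eq' {Ω : Type*} (X : Ω → ℝ) (C t : ℝ) (ht : 0 < t) :
    {ω | t < max (X ω - C) 0} = {ω | C + t < X ω} := by
  ext ω
  simp only [Set.mem_setOf_eq, lt_max_iff]
  constructor
  · rintro (h | h) <;> linarith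
  · intro h; left; linarith

private lemma trunc_repr' {Ω : Type*} [MeasurableSpace Ω] (μ : Measure Ω) [IsProbabilityMeasure μ]
    {X : Ω → ℝ} (hX : Measurable X) (hXint : Integrable X μ) (C : ℝ) :
    ∫ ω in {ω | C ≤ X ω}, X ω ∂μ
      = C * (μ {ω | C ≤ X ω}).toReal
        + ∫ t in Set.Ioi 0, (μ {ω | C + t < X ω}).toReal := by
  have hs : MeasurableSet {ω | C ≤ X ω} := hX measurableSet_Ici
  have hsub : Integrable (fun ω => X ω - C) μ := hXint.sub (integrable_const C)
  have hfint : Integrable (fun ω => max (X ω - C) 0) μ := hsub.pos_part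
  have hind : ∀ ω, Set.indicator {ω | C ≤ X ω} (fun ω => X ω - C) ω = max (X ω - C) 0 := by
    intro ω
    by_cases h : C ≤ X ω
    · rw [Set.indicator_of_mem (show ω ∈ {ω | C ≤ X ω} from h), max_eq_left (by linarith)]
    · rw [Set.indicator_of_notMem (show ω ∉ {ω | C ≤ X ω} from h),
        max_eq_right (by push_neg at h; linarith)]
  have key : ∫ ω, max (X ω - C) 0 ∂μ
      = ∫ t in Set.Ioi 0, (μ {ω | C + t < X ω}).toReal := by
    rw [hfint.integral_eq_integral_meas_lt (Filter.Eventually.of_forall fun ω => le_max_right _ _)]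
    refine setIntegral_congr_fun measurableSet_Ioi fun t ht => ?_
    rw [set_eq' X C t ht]; rfl
  have h1 : ∫ ω in {ω | C ≤ X ω}, X ω ∂μ
      = ∫ ω in {ω | C ≤ X ω}, ((X ω - C) + C) ∂μ :=
    setIntegral_congr_fun hs fun ω _ => by ring
  have i1 : Integrable (fun ω => X ω - C) (μ.restrict {ω | C ≤ X ω}) := hsub.integrableOn
  have i2 : Integrable (fun _ : Ω => C) (μ.restrict {ω | C ≤ X ω}) :=
    (integrable_const C).integrableOn
  rw [h1, integral_add i1 i2, setIntegral_const, ← key, ← integral_indicator hs,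
    integral_congr_ae (Filter.Eventually.of_forall hind)]
  simp only [smul_eq_mul, measureReal_def]
  ring

private lemma compl_toReal' {Ω : Type*} [MeasurableSpace Ω] (μ : Measure Ω)
    [IsProbabilityMeasure μ] {Z : Ω → ℝ} (hZ : Measurable Z) (s : ℝ) :
    (μ {ω | s < Z ω}).toReal = 1 - (μ {ω | Z ω ≤ s}).toReal := by
  have h : {ω | s < Z ω} = {ω | Z ω ≤ s}ᶜ := by ext ω; simp [not_le]
  rw [h, measure_compl (show MeasurableSet {ω | Z ω ≤ s} from hZ measurableSet_Iic)
      (measure_ne_top μ _), measure_univ,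
    ENNReal.toReal_sub_of_le prob_le_one ENNReal.one_ne_top, ENNReal.toReal_one]

private lemma point_bound' {Ω : Type*} [MeasurableSpace Ω] (μ : Measure Ω)
    [IsProbabilityMeasure μ]
    {X Y : Ω → ℝ} (hX : Measurable X) (hY : Measurable Y) {K : ℝ}
    (hK : ∀ z : ℝ, |(μ {ω | X ω ≤ z}).toReal - (μ {ω | Y ω ≤ z}).toReal| ≤ K / (1 + |z| ^ 3))
    (C : ℝ) :
    |(μ {ω | C ≤ X ω}).toReal - (μ {ω | C ≤ Y ω}).toReal| ≤ K / (1 + |C| ^ 3) := by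
  set s : ℕ → ℝ := fun n => C - 1 / (n + 1) with hs_def
  have hsC : Filter.Tendsto s atTop (nhds C) := by
    have := tendsto_one_div_add_atTop_nhds_zero_nat (𝕜 := ℝ)
    have h2 : Filter.Tendsto (fun _ : ℕ => C) atTop (nhds C) := tendsto_const_nhds
    simpa [hs_def, one_div] using h2.sub this
  have hlt : ∀ Z : Ω → ℝ, Measurable Z →
      Filter.Tendsto (fun n => (μ {ω | Z ω ≤ s n}).toReal) atTop
        (nhds ((μ {ω | Z ω < C}).toReal)) := by
    intro Z hZ
    have hmono : Monotone fun n => {ω | Z ω ≤ s n} := by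
      intro n m hnm ω (h : Z ω ≤ s n)
      have : s n ≤ s m := by
        have : (1 : ℝ) / (m + 1) ≤ 1 / (n + 1) := by
          apply one_div_le_one_div_of_le <;> [positivity; exact_mod_cast by omega]
        simp only [hs_def]; linarith
      exact le_trans h this
    have hunion : ⋃ n, {ω | Z ω ≤ s n} = {ω | Z ω < C} := by
      ext ω
      simp only [Set.mem_iUnion, Set.mem_setOf_eq]
      constructor
      · rintro ⟨n, hn⟩
        have : (0:ℝ) < 1 / (n + 1) := by positivity
        simp only [hs_def] at hn; linarith
      · intro h
        obtain ⟨n, hn⟩ := exists_nat_one_div_lt (show (0:ℝ) < C - Z ω by linarith)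
        exact ⟨n, by simp only [hs_def]; linarith⟩
    have := tendsto_measure_iUnion_atTop (μ := μ) hmono
    rw [hunion] at this
    exact (ENNReal.tendsto_toReal (measure_ne_top μ _)).comp this
  have hrhs : Filter.Tendsto (fun n => K / (1 + |s n| ^ 3)) atTop
      (nhds (K / (1 + |C| ^ 3))) := by
    have hc : Continuous fun z : ℝ => 1 + |z| ^ 3 := by continuity
    have h1 : Filter.Tendsto (fun n => 1 + |s n| ^ 3) atTop (nhds (1 + |C| ^ 3)) :=
      (hc.tendsto C).comp hsC
    exact Filter.Tendsto.div tendsto_const_nhds h1 (by positivity)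
  have hlhs : Filter.Tendsto
      (fun n => |(μ {ω | X ω ≤ s n}).toReal - (μ {ω | Y ω ≤ s n}).toReal|) atTop
      (nhds (|(μ {ω | X ω < C}).toReal - (μ {ω | Y ω < C}).toReal|)) :=
    ((hlt X hX).sub (hlt Y hY)).abs
  have hmain : |(μ {ω | X ω < C}).toReal - (μ {ω | Y ω < C}).toReal| ≤ K / (1 + |C| ^ 3) :=
    le_of_tendsto_of_tendsto' hlhs hrhs fun n => hK (s n)
  have hcompl : ∀ Z : Ω → ℝ, Measurable Z →
      (μ {ω | C ≤ Z ω}).toReal = 1 - (μ {ω | Z ω < C}).toReal := by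
    intro Z hZ
    have h : {ω | C ≤ Z ω} = {ω | Z ω < C}ᶜ := by ext ω; simp [not_lt]
    rw [h, measure_compl (show MeasurableSet {ω | Z ω < C} from hZ measurableSet_Iio)
        (measure_ne_top μ _), measure_univ,
      ENNReal.toReal_sub_of_le prob_le_one ENNReal.one_ne_top, ENNReal.toReal_one]
  rw [hcompl X hX, hcompl Y hY]
  calc |1 - (μ {ω | X ω < C}).toReal - (1 - (μ {ω | Y ω < C}).toReal)|
      = |(μ {ω | X ω < C}).toReal - (μ {ω | Y ω < C}).toReal| := by rw [← abs_neg]; ring_nf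
    _ ≤ K / (1 + |C| ^ 3) := hmain

private lemma tail_bound' {Ω : Type*} [MeasurableSpace Ω] (μ : Measure Ω)
    [IsProbabilityMeasure μ]
    {X Y : Ω → ℝ} (hX : Measurable X) (hY : Measurable Y)
    (hXint : Integrable X μ) (hYint : Integrable Y μ) {K : ℝ} (hK0 : 0 ≤ K)
    (hK : ∀ z : ℝ, |(μ {ω | X ω ≤ z}).toReal - (μ {ω | Y ω ≤ z}).toReal| ≤ K / (1 + |z| ^ 3))
    (C : ℝ) :
    |(∫ t in Set.Ioi 0, (μ {ω | C + t < X ω}).toReal)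
        - ∫ t in Set.Ioi 0, (μ {ω | C + t < Y ω}).toReal|
      ≤ K * ∫ z : ℝ, 1 / (1 + |z| ^ 3) := by
  have hint : ∀ Z : Ω → ℝ, Measurable Z → Integrable Z μ →
      IntegrableOn (fun t => (μ {ω | C + t < Z ω}).toReal) (Set.Ioi 0) := by
    intro Z hZ hZint
    have h := tail_int' μ ((hZint.sub (integrable_const C)).pos_part)
      (fun ω => le_max_right _ _)
    simp only [Pi.sub_apply] at h
    refine h.congr_fun (fun t ht => ?_) measurableSet_Ioi
    rw [← set_eq' Z C t ht]
  have iX := hint X hX hXint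
  have iY := hint Y hY hYint
  have hh : Integrable (fun t : ℝ => K / (1 + |t + C| ^ 3)) := by
    have h : Integrable (fun t : ℝ => 1 / (1 + |t + C| ^ 3)) :=
      ((measurePreserving_add_right volume C).integrable_comp_emb
        (measurableEmbedding_addRight C)).2 phi_int'
    simpa [mul_one_div, div_eq_mul_inv] using h.const_mul K
  have hptw : ∀ t : ℝ,
      |(μ {ω | C + t < X ω}).toReal - (μ {ω | C + t < Y ω}).toReal|
        ≤ K / (1 + |t + C| ^ 3) := by
    intro t
    rw [compl_toReal' μ hX (C + t), compl_toReal' μ hY (C + t)]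
    have h := hK (C + t)
    rw [show C + t = t + C from add_comm C t] at h ⊢
    calc |1 - (μ {ω | X ω ≤ t + C}).toReal - (1 - (μ {ω | Y ω ≤ t + C}).toReal)|
        = |(μ {ω | X ω ≤ t + C}).toReal - (μ {ω | Y ω ≤ t + C}).toReal| := by
          rw [← abs_neg]; ring_nf
      _ ≤ K / (1 + |t + C| ^ 3) := h
  calc |(∫ t in Set.Ioi 0, (μ {ω | C + t < X ω}).toReal)
        - ∫ t in Set.Ioi 0, (μ {ω | C + t < Y ω}).toReal|
      = |∫ t in Set.Ioi 0,
          ((μ {ω | C + t < X ω}).toReal - (μ {ω | C + t < Y ω}).toReal)| := by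
        rw [integral_sub iX iY]
    _ ≤ ∫ t in Set.Ioi 0,
          |(μ {ω | C + t < X ω}).toReal - (μ {ω | C + t < Y ω}).toReal| :=
        by simpa [Real.norm_eq_abs] using
          norm_integral_le_integral_norm (μ := volume.restrict (Set.Ioi 0))
            (fun t => (μ {ω | C + t < X ω}).toReal - (μ {ω | C + t < Y ω}).toReal)
    _ ≤ ∫ t in Set.Ioi 0, K / (1 + |t + C| ^ 3) := by
        refine setIntegral_mono_on ((iX.sub iY).abs) hh.integrableOn measurableSet_Ioi
          fun t _ => hptw t
    _ ≤ ∫ t : ℝ, K / (1 + |t + C| ^ 3) :=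
        setIntegral_le_integral hh (Filter.Eventually.of_forall fun t => by positivity)
    _ = K * ∫ t : ℝ, 1 / (1 + |t + C| ^ 3) := by
        simp_rw [← mul_one_div K]; exact integral_const_mul K _
    _ = K * ∫ z : ℝ, 1 / (1 + |z| ^ 3) := by
        rw [integral_add_right_eq_self (fun z : ℝ => 1 / (1 + |z| ^ 3)) C]

/-- If the CDFs of two integrable random variables `X, Y` satisfy the
non-uniform bound `|F(z) - G(z)| ≤ K/(1+|z|³)`, then the truncated first
moments above any threshold `C` differ by at most
`K·(|C|/(1+|C|³) + ∫ dz/(1+|z|³)) ≤ K·(1 + ∫ dz/(1+|z|³))`. -/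
theorem stmt_4 {Ω : Type*} [MeasurableSpace Ω] (μ : Measure Ω)
    [IsProbabilityMeasure μ]
    (X Y : Ω → ℝ) (hX : Measurable X) (hY : Measurable Y)
    (hXint : Integrable X μ) (hYint : Integrable Y μ)
    (F G : ℝ → ℝ)
    (hF : ∀ z, F z = (μ {ω | X ω ≤ z}).toReal)
    (hG : ∀ z, G z = (μ {ω | Y ω ≤ z}).toReal)
    (K : ℝ) (hK : ∀ z, |F z - G z| ≤ K / (1 + |z| ^ 3)) (C : ℝ) :
    |(∫ ω in {ω | C ≤ X ω}, X ω ∂μ) - ∫ ω in {ω | C ≤ Y ω}, Y ω ∂μ| ≤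
        K * (|C| / (1 + |C| ^ 3) + ∫ z : ℝ, 1 / (1 + |z| ^ 3)) ∧
      K * (|C| / (1 + |C| ^ 3) + ∫ z : ℝ, 1 / (1 + |z| ^ 3)) ≤
        K * (1 + ∫ z : ℝ, 1 / (1 + |z| ^ 3)) := by
  have hK' : ∀ z : ℝ,
      |(μ {ω | X ω ≤ z}).toReal - (μ {ω | Y ω ≤ z}).toReal| ≤ K / (1 + |z| ^ 3) := by
    intro z; rw [← hF z, ← hG z]; exact hK z
  have hK0 : 0 ≤ K := le_trans (abs_nonneg (F 0 - G 0)) (by simpa using hK 0)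
  constructor
  · rw [trunc_repr' μ hX hXint C, trunc_repr' μ hY hYint C]
    have h1 := point_bound' μ hX hY hK' C
    have h2 := tail_bound' μ hX hY hXint hYint hK0 hK' C
    set aX := (μ {ω | C ≤ X ω}).toReal
    set aY := (μ {ω | C ≤ Y ω}).toReal
    set IX := ∫ t in Set.Ioi 0, (μ {ω | C + t < X ω}).toReal
    set IY := ∫ t in Set.Ioi 0, (μ {ω | C + t < Y ω}).toReal
    calc |C * aX + IX - (C * aY + IY)|
        = |C * (aX - aY) + (IX - IY)| := by ring_nf
      _ ≤ |C * (aX - aY)| + |IX - IY| := abs_add_le _ _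
      _ = |C| * |aX - aY| + |IX - IY| := by rw [abs_mul]
      _ ≤ |C| * (K / (1 + |C| ^ 3)) + K * ∫ z : ℝ, 1 / (1 + |z| ^ 3) :=
          add_le_add (mul_le_mul_of_nonneg_left h1 (abs_nonneg C)) h2
      _ = K * (|C| / (1 + |C| ^ 3) + ∫ z : ℝ, 1 / (1 + |z| ^ 3)) := by ring
  · have hC1 : |C| / (1 + |C| ^ 3) ≤ 1 := by
      rw [div_le_one (by positivity)]
      nlinarith [abs_nonneg C, mul_nonneg (abs_nonneg C) (sq_nonneg (|C| - 1)),
        sq_nonneg (|C| - 1)]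
    exact mul_le_mul_of_nonneg_left (add_le_add_left hC1 _) hK0
end

section
/- Let X₁,…,Xₙ be i.i.d. real random variables with E[X₁] = 0, E[X₁²] = 1, E|X₁|³ < ∞, and let Sₙ = (X₁+⋯+Xₙ)/√n. Then E[Sₙ·1{Sₙ ≥ C}] converges to φ(C) (the truncated first moment of a standard normal above C) uniformly in C at rate O(1/√n), assuming the non-uniform Berry-Esseen bound |P(Sₙ ≤ z) - Φ(z)| ≤ K/(√n(1+|z|³)). -/
open Real MeasureTheory Filter ProbabilityTheory

/-- Standard normal density. -/
noncomputable def stdGaussPDF (x : ℝ) : ℝ :=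
  (Real.sqrt (2 * Real.pi))⁻¹ * Real.exp (-x ^ 2 / 2)

/-- Standard normal CDF. -/
noncomputable def stdGaussCDF (x : ℝ) : ℝ :=
  ∫ t in Set.Iic x, stdGaussPDF t

namespace StmtAux

open Set

lemma pdf_nonneg (x : ℝ) : 0 ≤ stdGaussPDF x := by
  unfold stdGaussPDF
  positivity

lemma pdf_le (x : ℝ) : stdGaussPDF x ≤ (Real.sqrt (2 * Real.pi))⁻¹ := by
  unfold stdGaussPDF
  have h1 : Real.exp (-x ^ 2 / 2) ≤ 1 := by
    rw [Real.exp_le_one_iff]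
    nlinarith [sq_nonneg x]
  have h2 : (0:ℝ) ≤ (Real.sqrt (2 * Real.pi))⁻¹ := by positivity
  nlinarith

lemma pdf_eq : stdGaussPDF = fun x =>
    (Real.sqrt (2 * Real.pi))⁻¹ * Real.exp (-(1/2) * x ^ 2) := by
  funext x
  unfold stdGaussPDF
  ring_nf

lemma pdf_continuous : Continuous stdGaussPDF := by
  unfold stdGaussPDF
  exact continuous_const.mul (((continuous_pow 2).neg.div_const 2).rexp)

lemma pdf_integrable : Integrable stdGaussPDF := by
  rw [pdf_eq]
  exact (integrable_exp_neg_mul_sq (by norm_num : (0:ℝ) < 1/2)).const_mul _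

lemma pdf_integral_one : ∫ x, stdGaussPDF x = 1 := by
  rw [pdf_eq, integral_const_mul, integral_gaussian]
  have h : Real.pi / (1/2) = 2 * Real.pi := by ring
  rw [h, inv_mul_cancel₀]
  exact Real.sqrt_ne_zero'.mpr (by positivity)

lemma xpdf_integrable : Integrable (fun x => x * stdGaussPDF x) := by
  have h := (integrable_rpow_mul_exp_neg_mul_sq (by norm_num : (0:ℝ) < 1/2)
    (by norm_num : (-1:ℝ) < 1)).const_mul ((Real.sqrt (2 * Real.pi))⁻¹)
  apply h.congr
  filter_upwards with x
  rw [Real.rpow_one]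
  unfold stdGaussPDF
  ring_nf

/-- The standard Gaussian measure. -/
noncomputable def gaussM : Measure ℝ :=
  volume.withDensity (fun x => ENNReal.ofReal (stdGaussPDF x))

lemma gauss_apply {s : Set ℝ} (hs : MeasurableSet s) :
    (gaussM s).toReal = ∫ x in s, stdGaussPDF x := by
  rw [gaussM, withDensity_apply _ hs,
    ← ofReal_integral_eq_lintegral_ofReal pdf_integrable.integrableOn
      (Eventually.of_forall fun x => pdf_nonneg x),
    ENNReal.toReal_ofReal (setIntegral_nonneg hs fun x _ => pdf_nonneg x)]

instance : IsProbabilityMeasure gaussM := by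
  constructor
  rw [gaussM, withDensity_apply _ MeasurableSet.univ, Measure.restrict_univ,
    ← ofReal_integral_eq_lintegral_ofReal pdf_integrable
      (Eventually.of_forall fun x => pdf_nonneg x),
    pdf_integral_one, ENNReal.ofReal_one]

lemma gaussCDF_eq (z : ℝ) : stdGaussCDF z = (gaussM (Iic z)).toReal :=
  (gauss_apply measurableSet_Iic).symm

lemma gauss_integrable_id : Integrable (fun x : ℝ => x) gaussM := by
  rw [gaussM, integrable_withDensity_iff
    (by exact (pdf_continuous.measurable).ennreal_ofReal)
    (Eventually.of_forall fun x => ENNReal.ofReal_lt_top)]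
  apply xpdf_integrable.congr
  filter_upwards with x
  rw [ENNReal.toReal_ofReal (pdf_nonneg x)]

lemma pdf_hasDeriv (x : ℝ) :
    HasDerivAt (fun y => -stdGaussPDF y) (x * stdGaussPDF x) x := by
  have h1 : HasDerivAt (fun y : ℝ => -y ^ 2 / 2) (-x) x := by
    have h := (hasDerivAt_pow 2 x).neg.div_const 2
    refine h.congr_deriv ?_
    simp
    ring
  have h2 := h1.exp
  have h3 := (h2.const_mul ((Real.sqrt (2 * Real.pi))⁻¹)).neg
  refine h3.congr_deriv ?_
  unfold stdGaussPDF
  ring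

lemma pdf_tendsto : Tendsto (fun x => -stdGaussPDF x) atTop (nhds 0) := by
  have h1 : Tendsto (fun x : ℝ => -x ^ 2 / 2) atTop atBot := by
    apply Tendsto.atBot_div_const (by norm_num : (0:ℝ) < 2)
    exact tendsto_neg_atTop_atBot.comp (tendsto_pow_atTop (two_ne_zero))
  have h2 : Tendsto (fun x : ℝ => Real.exp (-x ^ 2 / 2)) atTop (nhds 0) :=
    Real.tendsto_exp_atBot.comp h1
  have h3 := (h2.const_mul ((Real.sqrt (2 * Real.pi))⁻¹)).neg
  simpa [stdGaussPDF] using h3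

lemma gauss_trunc (C : ℝ) : ∫ x in Ici C, x ∂gaussM = stdGaussPDF C := by
  have h1 : ∫ x in Ici C, x ∂gaussM = ∫ x in Ici C, stdGaussPDF x * x := by
    rw [gaussM, restrict_withDensity measurableSet_Ici,
      show (fun x : ℝ => ENNReal.ofReal (stdGaussPDF x))
        = (fun x : ℝ => ((Real.toNNReal (stdGaussPDF x) : NNReal) : ENNReal)) from rfl,
      integral_withDensity_eq_integral_smul
        (pdf_continuous.measurable.real_toNNReal) (fun x : ℝ => x)]
    refine setIntegral_congr_fun measurableSet_Ici fun x _ => ?_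
    simp [NNReal.smul_def, Real.coe_toNNReal _ (pdf_nonneg x)]
  rw [h1, integral_Ici_eq_integral_Ioi]
  have := integral_Ioi_of_hasDerivAt_of_tendsto' (f := fun y => -stdGaussPDF y)
    (f' := fun y => y * stdGaussPDF y) (a := C)
    (fun x _ => pdf_hasDeriv x) (xpdf_integrable.integrableOn) pdf_tendsto
  rw [show (fun x : ℝ => stdGaussPDF x * x) = fun x : ℝ => x * stdGaussPDF x from
    funext fun x => mul_comm _ _]
  rw [this]
  ring

lemma maxset (C t : ℝ) (ht : 0 < t) :
    {a : ℝ | t < max (a - C) 0} = Ioi (C + t) := by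
  ext a
  simp only [Set.mem_setOf_eq, Set.mem_Ioi, lt_max_iff]
  constructor
  · rintro (h | h)
    · linarith
    · linarith
  · intro h; left; linarith

lemma trunc_formula (ρ : Measure ℝ) [IsProbabilityMeasure ρ]
    (hint : Integrable (fun x : ℝ => x) ρ) (C : ℝ) :
    ∫ x in Ici C, x ∂ρ
      = C * (ρ (Ici C)).toReal + ∫ t in Ioi (0:ℝ), (ρ (Ioi (C + t))).toReal := by
  have hsub : Integrable (fun x : ℝ => x - C) ρ := hint.sub (integrable_const C)
  have hmax : Integrable (fun x => max (x - C) 0) ρ := hsub.pos_part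
  have hnn : 0 ≤ᵐ[ρ] fun x => max (x - C) 0 :=
    Eventually.of_forall fun x => le_max_right _ _
  have lc := hmax.integral_eq_integral_meas_lt hnn
  have hts : ∫ t in Ioi (0:ℝ), ρ.real {a | t < max (a - C) 0}
      = ∫ t in Ioi (0:ℝ), (ρ (Ioi (C + t))).toReal :=
    setIntegral_congr_fun measurableSet_Ioi fun t ht => by rw [maxset C t ht, measureReal_def]
  have h2 : ∫ x, max (x - C) 0 ∂ρ = ∫ x in Ici C, (x - C) ∂ρ := by
    rw [← integral_add_compl (measurableSet_Ici (a := C)) hmax, compl_Ici]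
    have e1 : ∫ x in Ici C, max (x - C) 0 ∂ρ = ∫ x in Ici C, (x - C) ∂ρ :=
      setIntegral_congr_fun measurableSet_Ici fun x hx =>
        max_eq_left (sub_nonneg.mpr hx)
    have e2 : ∫ x in Iio C, max (x - C) 0 ∂ρ = 0 := by
      rw [setIntegral_congr_fun (g := fun _ => (0:ℝ)) measurableSet_Iio
        (fun x hx => max_eq_right (by simp only [Set.mem_Iio] at hx; linarith))]
      simp
    rw [e1, e2, add_zero]
  have h3 : ∫ x in Ici C, (x : ℝ) ∂ρ
      = (∫ x in Ici C, (x - C) ∂ρ) + ∫ _x in Ici C, (C:ℝ) ∂ρ := by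
    rw [← integral_add (hsub.integrableOn) (integrable_const C).integrableOn]
    exact setIntegral_congr_fun measurableSet_Ici fun x _ => by ring
  rw [h3, ← h2, lc, hts, setIntegral_const, smul_eq_mul, measureReal_def]
  ring

lemma tail_integrable (ρ : Measure ℝ) [IsProbabilityMeasure ρ]
    (hint : Integrable (fun x : ℝ => x) ρ) (C : ℝ) :
    IntegrableOn (fun t => (ρ (Ioi (C + t))).toReal) (Ioi (0:ℝ)) := by
  have hanti : Antitone (fun t => (ρ (Ioi (C + t))).toReal) := fun s t hst =>
    ENNReal.toReal_mono (measure_ne_top ρ _)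
      (measure_mono (Ioi_subset_Ioi (by linarith)))
  refine ⟨(hanti.measurable).aestronglyMeasurable, ?_⟩
  rw [hasFiniteIntegral_iff_ofReal
    (Eventually.of_forall fun t => ENNReal.toReal_nonneg)]
  have hsub : Integrable (fun x : ℝ => x - C) ρ := hint.sub (integrable_const C)
  have hmax : Integrable (fun x => max (x - C) 0) ρ := hsub.pos_part
  have hnn : 0 ≤ᵐ[ρ] fun x => max (x - C) 0 :=
    Eventually.of_forall fun x => le_max_right _ _
  have key := lintegral_eq_lintegral_meas_lt ρ hnn hmax.aemeasurable
  have hcg : ∫⁻ t in Ioi (0:ℝ), ENNReal.ofReal ((ρ (Ioi (C + t))).toReal)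
      = ∫⁻ t in Ioi (0:ℝ), ρ {a | t < max (a - C) 0} := by
    refine setLIntegral_congr_fun measurableSet_Ioi ?_
    intro t ht
    dsimp only
    rw [maxset C t ht, ENNReal.ofReal_toReal (measure_ne_top ρ _)]
  rw [hcg, ← key]
  exact hmax.lintegral_lt_top

lemma cdf_diff_le {x y : ℝ} (hxy : x ≤ y) :
    stdGaussCDF y - stdGaussCDF x ≤ (y - x) * (Real.sqrt (2 * Real.pi))⁻¹ := by
  have hd : Disjoint (Iic x) (Ioc x y) := by
    refine Set.disjoint_left.mpr fun a ha hb => ?_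
    exact absurd hb.1 (not_lt.mpr ha)
  have hu := setIntegral_union hd measurableSet_Ioc
    (pdf_integrable.integrableOn (s := Iic x))
    (pdf_integrable.integrableOn (s := Ioc x y)) (f := stdGaussPDF) (μ := volume)
  rw [Set.Iic_union_Ioc_eq_Iic hxy] at hu
  have hb : ∫ t in Ioc x y, stdGaussPDF t ≤ (y - x) * (Real.sqrt (2 * Real.pi))⁻¹ := by
    have hfin : (volume (Ioc x y)) < ⊤ := by
      rw [Real.volume_Ioc]; exact ENNReal.ofReal_lt_top
    have hle := norm_setIntegral_le_of_norm_le_const (μ := volume) (s := Ioc x y)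
      hfin (C := (Real.sqrt (2 * Real.pi))⁻¹)
      (fun t _ => by rw [Real.norm_eq_abs, abs_of_nonneg (pdf_nonneg t)]; exact pdf_le t)
    have hvol : (volume (Ioc x y)).toReal = y - x := by
      rw [Real.volume_Ioc, ENNReal.toReal_ofReal (by linarith)]
    calc ∫ t in Ioc x y, stdGaussPDF t ≤ ‖∫ t in Ioc x y, stdGaussPDF t‖ :=
          le_abs_self _
      _ ≤ (Real.sqrt (2 * Real.pi))⁻¹ * (volume (Ioc x y)).toReal := hle
      _ = (y - x) * (Real.sqrt (2 * Real.pi))⁻¹ := by rw [hvol]; ring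
  unfold stdGaussCDF
  rw [hu]
  linarith

lemma Iio_bound (ρ : Measure ℝ) [IsProbabilityMeasure ρ] {D K0 : ℝ} (hD : 0 < D)
    (hbound : ∀ z, |(ρ (Iic z)).toReal - stdGaussCDF z| ≤ K0 / (D * (1 + |z| ^ 3)))
    (C : ℝ) :
    |(ρ (Iio C)).toReal - stdGaussCDF C| ≤ K0 / (D * (1 + |C| ^ 3)) := by
  have hK0 : 0 ≤ K0 := by
    have h := (abs_nonneg ((ρ (Iic 0)).toReal - stdGaussCDF 0)).trans (hbound 0)
    simp only [abs_zero] at h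
    norm_num at h
    have h2 := mul_nonneg h hD.le
    rwa [div_mul_cancel₀ _ (ne_of_gt hD)] at h2
  rw [abs_sub_le_iff]
  constructor
  · have m1 : (ρ (Iio C)).toReal ≤ (ρ (Iic C)).toReal :=
      ENNReal.toReal_mono (measure_ne_top _ _) (measure_mono (Iio_subset_Iic le_rfl))
    have m2 := (le_abs_self _).trans (hbound C)
    linarith
  · set a := (Real.sqrt (2 * Real.pi))⁻¹ with ha
    have htend : Tendsto (fun ε : ℝ => ε * a + K0 / (D * (1 + |C - ε| ^ 3)))
        (nhdsWithin 0 (Ioi 0)) (nhds (K0 / (D * (1 + |C| ^ 3)))) := by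
      have hc : Continuous (fun ε : ℝ => ε * a + K0 / (D * (1 + |C - ε| ^ 3))) := by
        refine Continuous.add (continuous_id.mul continuous_const) ?_
        refine Continuous.div continuous_const ?_ ?_
        · exact continuous_const.mul (continuous_const.add
            (((continuous_const.sub continuous_id).abs).pow 3))
        · intro ε
          have h3 : (0:ℝ) ≤ |C - ε| ^ 3 := by positivity
          nlinarith
      have h0 := (hc.tendsto 0).mono_left (nhdsWithin_le_nhds (s := Ioi (0:ℝ)))
      simpa using h0
    refine ge_of_tendsto htend ?_
    filter_upwards [self_mem_nhdsWithin] with ε hε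
    simp only [Set.mem_Ioi] at hε
    have m1 : (ρ (Iic (C - ε))).toReal ≤ (ρ (Iio C)).toReal :=
      ENNReal.toReal_mono (measure_ne_top _ _)
        (measure_mono (Iic_subset_Iio.mpr (by linarith)))
    have m2 : stdGaussCDF (C - ε) - (ρ (Iic (C - ε))).toReal
        ≤ K0 / (D * (1 + |C - ε| ^ 3)) := (abs_sub_le_iff.mp (hbound (C - ε))).2
    have m3 : stdGaussCDF C - stdGaussCDF (C - ε) ≤ ε * a := by
      have h := cdf_diff_le (show C - ε ≤ C by linarith)
      rw [show C - (C - ε) = ε by ring] at h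
      exact h
    linarith

lemma gauss_Ioi (z : ℝ) : (gaussM (Ioi z)).toReal = 1 - stdGaussCDF z := by
  have h := prob_compl_eq_one_sub (μ := gaussM) (measurableSet_Iic (a := z))
  rw [compl_Iic] at h
  rw [h, ENNReal.toReal_sub_of_le prob_le_one ENNReal.one_ne_top, ENNReal.toReal_one,
    gaussCDF_eq]

lemma gauss_Ici (C : ℝ) : (gaussM (Ici C)).toReal = 1 - stdGaussCDF C := by
  rw [gauss_apply measurableSet_Ici, integral_Ici_eq_integral_Ioi,
    ← gauss_apply measurableSet_Ioi, gauss_Ioi]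

end StmtAux

/-- Uniform convergence of partial first moments: for `Sₙ` the normalized sum
of i.i.d. standardized variables with finite third moment, assuming the
non-uniform Berry-Esseen bound, `E[Sₙ·1{Sₙ ≥ C}]` converges to `φ(C)`
uniformly in `C` at rate `O(1/√n)`. -/
theorem stmt_19 {Ω : Type*} [MeasurableSpace Ω] (μ : Measure Ω)
    [IsProbabilityMeasure μ]
    (X : ℕ → Ω → ℝ) (hmeas : ∀ j, Measurable (X j))
    (hindep : iIndepFun X μ)
    (hident : ∀ j, Measure.map (X j) μ = Measure.map (X 0) μ)
    (hmean : ∫ ω, X 0 ω ∂μ = 0) (hvar : ∫ ω, (X 0 ω) ^ 2 ∂μ = 1)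
    (hthird : Integrable (fun ω => |X 0 ω| ^ 3) μ)
    (S : ℕ → Ω → ℝ)
    (hS : ∀ n ω, S n ω = (∑ j ∈ Finset.range n, X j ω) / Real.sqrt n)
    (hSint : ∀ n, Integrable (S n) μ)
    (F : ℕ → ℝ → ℝ) (hF : ∀ n z, F n z = (μ {ω | S n ω ≤ z}).toReal)
    (K : ℝ)
    (hBE : ∀ n : ℕ, 0 < n → ∀ z : ℝ,
      |F n z - stdGaussCDF z| ≤ K / (Real.sqrt n * (1 + |z| ^ 3))) :
    ∃ K' : ℝ, 0 < K' ∧ ∀ n : ℕ, 0 < n → ∀ C : ℝ,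
      |(∫ ω in {ω | C ≤ S n ω}, S n ω ∂μ) - stdGaussPDF C| ≤ K' / Real.sqrt n := by
  have hK0 : 0 ≤ K := by
    have h := (abs_nonneg (F 1 0 - stdGaussCDF 0)).trans (hBE 1 one_pos 0)
    norm_num [Real.sqrt_one] at h
    exact h
  refine ⟨(1 + 2 * Real.pi) * K + 1, ?_, ?_⟩
  · have h1 : (0:ℝ) ≤ (1 + 2 * Real.pi) * K :=
      mul_nonneg (by positivity) hK0
    linarith
  intro n hn C
  have hD : 0 < Real.sqrt n := Real.sqrt_pos.mpr (by exact_mod_cast hn)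
  have hSm : Measurable (S n) := by
    have hfun : S n = fun ω => (∑ j ∈ Finset.range n, X j ω) / Real.sqrt n :=
      funext (hS n)
    rw [hfun]
    exact (Finset.measurable_sum (Finset.range n) fun j _ => hmeas j).div_const _
  set ρ := μ.map (S n) with hρ
  haveI : IsProbabilityMeasure ρ := Measure.isProbabilityMeasure_map hSm.aemeasurable
  have hρint : Integrable (fun x : ℝ => x) ρ := by
    rw [hρ]
    exact (integrable_map_measure
      measurable_id.aestronglyMeasurable hSm.aemeasurable).2 (hSint n)
  have hρIic : ∀ z, (ρ (Set.Iic z)).toReal = F n z := by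
    intro z
    rw [hF, hρ, Measure.map_apply hSm measurableSet_Iic]
    rfl
  have hbound : ∀ z, |(ρ (Set.Iic z)).toReal - stdGaussCDF z|
      ≤ K / (Real.sqrt n * (1 + |z| ^ 3)) := fun z => by
    rw [hρIic z]; exact hBE n hn z
  have hρIoi : ∀ z, (ρ (Set.Ioi z)).toReal = 1 - (ρ (Set.Iic z)).toReal := by
    intro z
    have h := prob_compl_eq_one_sub (μ := ρ) (measurableSet_Iic (a := z))
    rw [Set.compl_Iic] at h
    rw [h, ENNReal.toReal_sub_of_le prob_le_one ENNReal.one_ne_top, ENNReal.toReal_one]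
  have hρIci : (ρ (Set.Ici C)).toReal = 1 - (ρ (Set.Iio C)).toReal := by
    have h := prob_compl_eq_one_sub (μ := ρ) (measurableSet_Iio (a := C))
    rw [Set.compl_Iio] at h
    rw [h, ENNReal.toReal_sub_of_le prob_le_one ENNReal.one_ne_top, ENNReal.toReal_one]
  have hLHS : ∫ ω in {ω | C ≤ S n ω}, S n ω ∂μ = ∫ x in Set.Ici C, x ∂ρ := by
    rw [hρ]
    exact (setIntegral_map measurableSet_Ici
      measurable_id.aestronglyMeasurable hSm.aemeasurable).symm
  have hA := StmtAux.trunc_formula ρ hρint C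
  have hGauss : stdGaussPDF C = C * (StmtAux.gaussM (Set.Ici C)).toReal
      + ∫ t in Set.Ioi (0:ℝ), (StmtAux.gaussM (Set.Ioi (C + t))).toReal := by
    rw [← StmtAux.gauss_trunc C]
    exact StmtAux.trunc_formula _ StmtAux.gauss_integrable_id C
  have hρtail := StmtAux.tail_integrable ρ hρint C
  have hνtail := StmtAux.tail_integrable StmtAux.gaussM StmtAux.gauss_integrable_id C
  -- integrability of the translate of the Cauchy-type bound
  have htransl : Integrable (fun t : ℝ => (1 + (C + t) ^ 2)⁻¹) := by
    have h1 : Measure.map (fun t : ℝ => C + t) volume = volume :=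
      map_add_left_eq_self volume C
    have h2 : Integrable (fun x : ℝ => (1 + x ^ 2)⁻¹)
        (Measure.map (fun t : ℝ => C + t) volume) := by
      rw [h1]; exact integrable_inv_one_add_sq
    exact h2.comp_measurable (measurable_const_add C)
  have hIval : (∫ t : ℝ, (1 + (C + t) ^ 2)⁻¹) = Real.pi := by
    have h := integral_add_left_eq_self (μ := volume) (fun x : ℝ => (1 + x ^ 2)⁻¹) C
    rw [h, integral_univ_inv_one_add_sq]
  -- pointwise bound on tail differences
  have hptw : ∀ t ∈ Set.Ioi (0:ℝ),
      |(ρ (Set.Ioi (C + t))).toReal - (StmtAux.gaussM (Set.Ioi (C + t))).toReal|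
        ≤ 2 * K / Real.sqrt n * (1 + (C + t) ^ 2)⁻¹ := by
    intro t _
    rw [hρIoi (C + t), StmtAux.gauss_Ioi (C + t)]
    have e1 : 1 - (ρ (Set.Iic (C + t))).toReal - (1 - stdGaussCDF (C + t))
        = -((ρ (Set.Iic (C + t))).toReal - stdGaussCDF (C + t)) := by ring
    rw [e1, abs_neg]
    refine (hbound (C + t)).trans ?_
    have e2 : 2 * K / Real.sqrt n * (1 + (C + t) ^ 2)⁻¹
        = (2 * K) / (Real.sqrt n * (1 + (C + t) ^ 2)) := by
      have h1 : Real.sqrt n ≠ 0 := ne_of_gt hD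
      have h2 : (1:ℝ) + (C + t) ^ 2 ≠ 0 := by positivity
      field_simp
    rw [e2, div_le_div_iff₀ (by positivity) (by positivity)]
    have hu : 1 + (C + t) ^ 2 ≤ 2 * (1 + |C + t| ^ 3) := by
      nlinarith [abs_nonneg (C + t), sq_abs (C + t),
        mul_nonneg (abs_nonneg (C + t)) (sq_nonneg (|C + t| - 1))]
    calc K * (Real.sqrt n * (1 + (C + t) ^ 2))
        ≤ K * (Real.sqrt n * (2 * (1 + |C + t| ^ 3))) := by
          refine mul_le_mul_of_nonneg_left ?_ hK0
          exact mul_le_mul_of_nonneg_left hu hD.le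
      _ = 2 * K * (Real.sqrt n * (1 + |C + t| ^ 3)) := by ring
  -- bound for the first term
  have hIio := StmtAux.Iio_bound ρ hD hbound C
  have habs : |C| ≤ 1 + |C| ^ 3 := by
    nlinarith [mul_nonneg (abs_nonneg C) (sq_nonneg (|C| - 1)), sq_nonneg (|C| - 1/2)]
  have hb1 : |C * ((ρ (Set.Ici C)).toReal - (StmtAux.gaussM (Set.Ici C)).toReal)|
      ≤ K / Real.sqrt n := by
    rw [hρIci, StmtAux.gauss_Ici]
    have e1 : C * (1 - (ρ (Set.Iio C)).toReal - (1 - stdGaussCDF C))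
        = -(C * ((ρ (Set.Iio C)).toReal - stdGaussCDF C)) := by ring
    rw [e1, abs_neg, abs_mul]
    have h1 : |C| * |(ρ (Set.Iio C)).toReal - stdGaussCDF C|
        ≤ |C| * (K / (Real.sqrt n * (1 + |C| ^ 3))) :=
      mul_le_mul_of_nonneg_left hIio (abs_nonneg C)
    refine h1.trans ?_
    have e2 : |C| * (K / (Real.sqrt n * (1 + |C| ^ 3)))
        = (K * |C|) / (Real.sqrt n * (1 + |C| ^ 3)) := by
      rw [mul_comm, div_mul_eq_mul_div]
    rw [e2, div_le_div_iff₀ (by positivity) hD]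
    have hmul := mul_le_mul_of_nonneg_left habs (mul_nonneg hK0 hD.le)
    nlinarith [hmul]
  -- bound for the tail term
  have hb2 : |(∫ t in Set.Ioi (0:ℝ), (ρ (Set.Ioi (C + t))).toReal)
      - ∫ t in Set.Ioi (0:ℝ), (StmtAux.gaussM (Set.Ioi (C + t))).toReal|
      ≤ 2 * K / Real.sqrt n * Real.pi := by
    rw [← integral_sub hρtail hνtail]
    have h2a := norm_integral_le_integral_norm (μ := volume.restrict (Set.Ioi (0:ℝ)))
      (f := fun t => (ρ (Set.Ioi (C + t))).toReal
        - (StmtAux.gaussM (Set.Ioi (C + t))).toReal)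
    rw [Real.norm_eq_abs] at h2a
    refine h2a.trans ?_
    have h2b : ∫ t in Set.Ioi (0:ℝ), ‖(ρ (Set.Ioi (C + t))).toReal
          - (StmtAux.gaussM (Set.Ioi (C + t))).toReal‖
        ≤ ∫ t in Set.Ioi (0:ℝ), 2 * K / Real.sqrt n * (1 + (C + t) ^ 2)⁻¹ := by
      refine integral_mono_of_nonneg (Eventually.of_forall fun t => norm_nonneg _)
        ((htransl.const_mul _).integrableOn) ?_
      refine (ae_restrict_iff' measurableSet_Ioi).mpr (Eventually.of_forall ?_)
      intro t ht
      simp only [Real.norm_eq_abs]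
      exact hptw t ht
    refine h2b.trans ?_
    rw [integral_const_mul]
    have h2d : ∫ t in Set.Ioi (0:ℝ), (1 + (C + t) ^ 2)⁻¹ ≤ Real.pi := by
      have h := setIntegral_le_integral (s := Set.Ioi (0:ℝ)) htransl
        (Eventually.of_forall fun t => by positivity)
      rwa [hIval] at h
    have h2e : (0:ℝ) ≤ 2 * K / Real.sqrt n := by positivity
    exact mul_le_mul_of_nonneg_left h2d h2e
  -- assemble
  rw [hLHS, hA]
  have e : C * (ρ (Set.Ici C)).toReal
        + (∫ t in Set.Ioi (0:ℝ), (ρ (Set.Ioi (C + t))).toReal) - stdGaussPDF C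
      = C * ((ρ (Set.Ici C)).toReal - (StmtAux.gaussM (Set.Ici C)).toReal)
        + ((∫ t in Set.Ioi (0:ℝ), (ρ (Set.Ioi (C + t))).toReal)
          - ∫ t in Set.Ioi (0:ℝ), (StmtAux.gaussM (Set.Ioi (C + t))).toReal) := by
    rw [hGauss]; ring
  rw [e]
  refine (abs_add_le _ _).trans ?_
  have htot : K / Real.sqrt n + 2 * K / Real.sqrt n * Real.pi
      = ((1 + 2 * Real.pi) * K) / Real.sqrt n := by ring
  have hfin : ((1 + 2 * Real.pi) * K) / Real.sqrt n
      ≤ ((1 + 2 * Real.pi) * K + 1) / Real.sqrt n :=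
    (div_le_div_iff_of_pos_right hD).mpr (by linarith)
  linarith [hb1, hb2]
end
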